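/- Let k and t be positive integers and let G be a finite simple graph that admits a linear ordering L of its vertex set with |R_{L,∞}(y)| ≤ t for every vertex y (equivalently, col_∞(G) ≤ t+1; for instance, any graph of tree-width at most t). Then dcol_k(G) ≤ t·C(⌊k/2⌋+t, t) + 1, where C(·,·) denotes the binomial coefficient. -/

import Mathlib

open SimpleGraph

variable {V : Type*}

/-- `x` is `∞`-accessible from `y` w.r.t. the linear order `L` (no length restriction). -/
def AccessibleInf (G : SimpleGraph V) (L : LinearOrder V) (x y : V) : Prop :=
  L.lt x y ∧ ∃ w : G.Walk x y, w.IsPath ∧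
    ∀ z ∈ w.support, z ≠ x → z ≠ y → L.lt y z

/-- Membership of `x` in `D_{L,k}(y)`: there is a path `z_0,…,z_s` from `x = z_0` to `y = z_s` of
length `s ≤ k` on which `x` is the minimum vertex w.r.t. `L` and whose vertices `z_i` with
`⌊k/2⌋+1 ≤ i ≤ s` all satisfy `y ≤ z_i`. -/
def DAccessible (G : SimpleGraph V) (L : LinearOrder V) (k : ℕ) (x y : V) : Prop :=
  x ≠ y ∧ ∃ w : G.Walk x y, w.IsPath ∧ w.length ≤ k ∧
    (∀ z ∈ w.support, L.le x z) ∧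
    ∀ i : ℕ, k / 2 + 1 ≤ i → i ≤ w.length → L.le y (w.getVert i)

/-- The distance-`k`-colouring number. -/
noncomputable def dcol (G : SimpleGraph V) (k : ℕ) : ℕ :=
  1 + sInf { m : ℕ | ∃ L : LinearOrder V, ∀ y : V,
      {x : V | DAccessible G L k x y}.ncard ≤ m }


open Finset

section Abstract

open scoped Classical

variable {V : Type*} [Fintype V] [LinearOrder V]

/-- bottom-index of `w` in the "back-neighbourhood" of `v` w.r.t. relation `T`. -/
noncomputable def idxB (T : V → V → Prop) (v w : V) : ℕ :=
  1 + (Finset.univ.filter (fun z => T z v ∧ z < w)).card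

/-- decreasing-path reachability with nondecreasing bottom-indices, start index ≥ m. -/
def gR (T : V → V → Prop) : ℕ → ℕ → V → V → Prop
  | 0, _, v, x => x = v
  | (r+1), m, v, x => x = v ∨ ∃ w, T w v ∧ m ≤ idxB T v w ∧ gR T r (idxB T v w) w x

/-- plain decreasing-path reachability within `r` steps. -/
def decReach (T : V → V → Prop) : ℕ → V → V → Prop
  | 0, v, x => x = v
  | (r+1), v, x => x = v ∨ ∃ w, T w v ∧ decReach T r w x

variable {T : V → V → Prop}

lemma one_le_idxB (v w : V) : 1 ≤ idxB T v w := Nat.le_add_right 1 _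

lemma gR_self (r m : ℕ) (v : V) : gR T r m v v := by
  cases r with
  | zero => rfl
  | succ r => exact Or.inl rfl

lemma gR_mono_m {r m m' : ℕ} {v x : V} (h : m' ≤ m) (hg : gR T r m v x) : gR T r m' v x := by
  cases r with
  | zero => exact hg
  | succ r =>
    rcases hg with h1 | ⟨w, h1, h2, h3⟩
    · exact Or.inl h1
    · exact Or.inr ⟨w, h1, le_trans h h2, h3⟩

lemma gR_mono_r {r r' m : ℕ} {v x : V} (h : r ≤ r') (hg : gR T r m v x) : gR T r' m v x := by
  induction r' generalizing r v x m with
  | zero => interval_cases r; exact hg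
  | succ n ih =>
    cases r with
    | zero => exact Or.inl hg
    | succ r =>
      rcases hg with h1 | ⟨w, h1, h2, h3⟩
      · exact Or.inl h1
      · exact Or.inr ⟨w, h1, h2, ih (by omega) h3⟩

lemma idxB_lt_idxB (hTri : ∀ x y z : V, T x z → T y z → x < y → T x y)
    {v u w : V} (hu : T u v) (hw : T w v) (huw : u < w) : idxB T v u < idxB T v w := by
  have hsub : insert u (Finset.univ.filter (fun z => T z v ∧ z < u)) ⊆
      Finset.univ.filter (fun z => T z v ∧ z < w) := by
    intro z hz
    rcases Finset.mem_insert.mp hz with rfl | hz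
    · simp [hu, huw]
    · simp only [Finset.mem_filter] at hz ⊢
      exact ⟨hz.1, hz.2.1, lt_trans hz.2.2 huw⟩
  have hcard := Finset.card_le_card hsub
  rw [Finset.card_insert_of_notMem (by simp)] at hcard
  simpa [idxB] using hcard

lemma gR_succ {r m : ℕ} {v x : V} : gR T (r+1) m v x ↔
    (x = v ∨ ∃ w, T w v ∧ m ≤ idxB T v w ∧ gR T r (idxB T v w) w x) := Iff.rfl

lemma decReach_succ {r : ℕ} {v x : V} : decReach T (r+1) v x ↔
    (x = v ∨ ∃ w, T w v ∧ decReach T r w x) := Iff.rfl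

lemma main_A (hT : ∀ x y : V, T x y → x < y)
    (hTri : ∀ x y z : V, T x z → T y z → x < y → T x y) :
    ∀ r i v w, T w v → idxB T v w ≤ i → ∀ x, gR T r 1 w x →
      ∃ w', T w' v ∧ idxB T v w' ≤ idxB T v w ∧ gR T r (idxB T v w') w' x := by
  intro r
  induction r with
  | zero =>
    intro i v w hTwv _ x hx
    exact ⟨w, hTwv, le_rfl, hx⟩
  | succ r IHr =>
    intro i
    induction i using Nat.strong_induction_on with
    | _ i IHi =>
      intro v w hTwv hiw x hx
      rcases gR_succ.mp hx with hxw | ⟨u, hTuw, _, hgu⟩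
      · refine ⟨w, hTwv, le_rfl, ?_⟩
        rw [hxw]; exact gR_self _ _ _
      by_cases hcase : idxB T v w ≤ idxB T w u
      · exact ⟨w, hTwv, le_rfl, gR_succ.mpr (Or.inr ⟨u, hTuw, hcase, hgu⟩)⟩
      push_neg at hcase
      have hgu1 : gR T (r+1) 1 u x := gR_mono_r (Nat.le_succ r) (gR_mono_m (one_le_idxB _ _) hgu)
      by_cases hTuv : T u v
      · have hlt : idxB T v u < idxB T v w := idxB_lt_idxB hTri hTuv hTwv (hT u w hTuw)
        obtain ⟨w', hw'1, hw'2, hw'3⟩ := IHi (idxB T v u) (lt_of_lt_of_le hlt hiw) v u hTuv le_rfl x hgu1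
        exact ⟨w', hw'1, le_trans hw'2 (le_of_lt hlt), hw'3⟩
      · have hwF : w ∈ Finset.univ.filter (fun z => T z v ∧ u < z) := by
          simp [hTwv, hT u w hTuw]
        obtain ⟨q, hqF, hqmin⟩ : ∃ q ∈ Finset.univ.filter (fun z => T z v ∧ u < z),
            ∀ z ∈ Finset.univ.filter (fun z => T z v ∧ u < z), q ≤ z := by
          have hFne : (Finset.univ.filter (fun z => T z v ∧ u < z)).Nonempty := ⟨w, hwF⟩
          exact ⟨_, Finset.min'_mem _ hFne, fun z hz => Finset.min'_le _ z hz⟩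
        have hTqv : T q v := (Finset.mem_filter.mp hqF).2.1
        have huq : u < q := (Finset.mem_filter.mp hqF).2.2
        have hset : Finset.univ.filter (fun z => T z v ∧ z < q)
            = Finset.univ.filter (fun z => T z v ∧ z < u) := by
          ext z; simp only [Finset.mem_filter, Finset.mem_univ, true_and]
          constructor
          · rintro ⟨h1, h2⟩
            refine ⟨h1, ?_⟩
            rcases lt_trichotomy z u with h | rfl | h
            · exact h
            · exact absurd h1 hTuv
            · exact absurd h2 (not_lt.mpr (hqmin z (by simp [h1, h])))
          · rintro ⟨h1, h2⟩; exact ⟨h1, lt_trans h2 huq⟩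
        have hsub2 : Finset.univ.filter (fun z => T z v ∧ z < u)
            ⊆ Finset.univ.filter (fun z => T z w ∧ z < u) := by
          intro z hz; simp only [Finset.mem_filter, Finset.mem_univ, true_and] at hz ⊢
          exact ⟨hTri z w v hz.1 hTwv (lt_trans hz.2 (hT u w hTuw)), hz.2⟩
        have hqle : idxB T v q ≤ idxB T w u := by
          unfold idxB; rw [hset]; exact Nat.add_le_add_left (Finset.card_le_card hsub2) 1
        have hqlt : idxB T v q < idxB T v w := lt_of_le_of_lt hqle hcase
        have hqw : q < w := by
          rcases lt_or_eq_of_le (hqmin w hwF) with h | h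
          · exact h
          · exfalso; rw [h] at hqlt; exact lt_irrefl _ hqlt
        have hTqw : T q w := hTri q w v hTqv hTwv hqw
        have hTuq : T u q := hTri u q w hTuw hTqw huq
        obtain ⟨u'', hu''1, _, hu''3⟩ := IHr (idxB T q u) q u hTuq le_rfl x
          (gR_mono_m (one_le_idxB _ _) hgu)
        have hgq : gR T (r+1) 1 q x := gR_succ.mpr (Or.inr ⟨u'', hu''1, one_le_idxB _ _, hu''3⟩)
        obtain ⟨w', hw'1, hw'2, hw'3⟩ := IHi (idxB T v q) (lt_of_lt_of_le hqlt hiw) v q hTqv le_rfl x hgq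
        exact ⟨w', hw'1, le_trans hw'2 (le_of_lt hqlt), hw'3⟩

lemma decReach_to_gR (hT : ∀ x y : V, T x y → x < y)
    (hTri : ∀ x y z : V, T x z → T y z → x < y → T x y) :
    ∀ r v x, decReach T r v x → gR T r 1 v x := by
  intro r
  induction r with
  | zero => intro v x hx; exact hx
  | succ r IH =>
    intro v x hx
    rcases decReach_succ.mp hx with hxv | ⟨w, hTwv, hd⟩
    · exact gR_succ.mpr (Or.inl hxv)
    · obtain ⟨w', hw'1, _, hw'3⟩ := main_A hT hTri r (idxB T v w) v w hTwv le_rfl x (IH w x hd)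
      exact gR_succ.mpr (Or.inr ⟨w', hw'1, one_le_idxB _ _, hw'3⟩)

lemma decReach_mono_r {r r' : ℕ} {v x : V} (h : r ≤ r') (hg : decReach T r v x) :
    decReach T r' v x := by
  induction r' generalizing r v x with
  | zero => interval_cases r; exact hg
  | succ n ih =>
    cases r with
    | zero => exact Or.inl hg
    | succ r =>
      rcases hg with h1 | ⟨w, h1, h3⟩
      · exact Or.inl h1
      · exact Or.inr ⟨w, h1, ih (by omega) h3⟩

lemma decReach_self (r : ℕ) (v : V) : decReach T r v v := by
  cases r with
  | zero => rfl
  | succ r => exact Or.inl rfl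

lemma sum_choose_Icc (r C : ℕ) :
    1 + ∑ c ∈ Finset.Icc 1 C, (r + c).choose c = (r + 1 + C).choose C := by
  induction C with
  | zero => simp
  | succ C ih =>
    rw [Finset.sum_Icc_succ_top (by omega)]
    have hp := Nat.choose_succ_succ (r + C + 1) C
    have e1 : r + (C + 1) = r + C + 1 := by omega
    have e2 : r + 1 + (C + 1) = r + C + 1 + 1 := by omega
    have e3 : r + 1 + C = r + C + 1 := by omega
    rw [e1, e2] at *
    rw [e3] at ih
    simp only [Nat.succ_eq_add_one] at hp
    omega

lemma idxB_le_t {t : ℕ} (hcard : ∀ v : V, (Finset.univ.filter (fun z => T z v)).card ≤ t)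
    {v w : V} (hw : T w v) : idxB T v w ≤ t := by
  have hsub : insert w (Finset.univ.filter (fun z => T z v ∧ z < w)) ⊆
      Finset.univ.filter (fun z => T z v) := by
    intro z hz
    rcases Finset.mem_insert.mp hz with rfl | hz
    · simp [hw]
    · simp only [Finset.mem_filter] at hz ⊢; exact ⟨hz.1, hz.2.1⟩
  have h := le_trans (Finset.card_le_card hsub) (hcard v)
  rw [Finset.card_insert_of_notMem (by simp)] at h
  simpa [idxB, Nat.add_comm] using h

lemma card_gR_le {t : ℕ} (hT : ∀ x y : V, T x y → x < y)
    (hTri : ∀ x y z : V, T x z → T y z → x < y → T x y)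
    (hcard : ∀ v : V, (Finset.univ.filter (fun z => T z v)).card ≤ t) :
    ∀ r m v, 1 ≤ m →
      (Finset.univ.filter (fun x => gR T r m v x)).card ≤ (r + (t + 1 - m)).choose (t + 1 - m) := by
  intro r
  induction r with
  | zero =>
    intro m v _
    have hset : (Finset.univ.filter (fun x => gR T 0 m v x)) = {v} := by
      ext z
      simp only [Finset.mem_filter, Finset.mem_univ, true_and, Finset.mem_singleton]
      exact Iff.rfl
    rw [hset, Finset.card_singleton]
    exact Nat.one_le_iff_ne_zero.mpr (Nat.choose_pos (Nat.le_add_left _ _)).ne'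
  | succ r IH =>
    intro m v hm
    set Bm := Finset.univ.filter (fun w => T w v ∧ m ≤ idxB T v w) with hBm
    have hsub : (Finset.univ.filter (fun x => gR T (r+1) m v x)) ⊆
        insert v (Bm.biUnion (fun w => Finset.univ.filter (fun x => gR T r (idxB T v w) w x))) := by
      intro x hx
      rcases gR_succ.mp (Finset.mem_filter.mp hx).2 with hxv | ⟨w, h1, h2, h3⟩
      · simp [hxv]
      · refine Finset.mem_insert_of_mem (Finset.mem_biUnion.mpr ⟨w, ?_, ?_⟩)
        · simp [hBm, h1, h2]
        · simp [h3]
    have h1 : (Finset.univ.filter (fun x => gR T (r+1) m v x)).card ≤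
        1 + ∑ w ∈ Bm, (Finset.univ.filter (fun x => gR T r (idxB T v w) w x)).card := by
      calc _ ≤ _ := Finset.card_le_card hsub
        _ ≤ _ + _ := Finset.card_insert_le _ _
        _ ≤ 1 + ∑ w ∈ Bm, (Finset.univ.filter (fun x => gR T r (idxB T v w) w x)).card := by
            rw [Nat.add_comm _ 1]
            exact Nat.add_le_add_left (Finset.card_biUnion_le) 1
    have h2 : ∑ w ∈ Bm, (Finset.univ.filter (fun x => gR T r (idxB T v w) w x)).card ≤
        ∑ w ∈ Bm, (r + (t + 1 - idxB T v w)).choose (t + 1 - idxB T v w) :=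
      Finset.sum_le_sum (fun w hw => IH (idxB T v w) w (one_le_idxB v w))
    have hinj : ∀ a ∈ Bm, ∀ b ∈ Bm, idxB T v a = idxB T v b → a = b := by
      intro a ha b hb hab
      have hTa : T a v := ((Finset.mem_filter.mp ha).2).1
      have hTb : T b v := ((Finset.mem_filter.mp hb).2).1
      rcases lt_trichotomy a b with h | h | h
      · exact absurd hab (Nat.ne_of_lt (idxB_lt_idxB hTri hTa hTb h))
      · exact h
      · exact absurd hab.symm (Nat.ne_of_lt (idxB_lt_idxB hTri hTb hTa h))
    have h3 : ∑ w ∈ Bm, (r + (t + 1 - idxB T v w)).choose (t + 1 - idxB T v w) =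
        ∑ a ∈ Bm.image (idxB T v), (r + (t + 1 - a)).choose (t + 1 - a) := by
      rw [Finset.sum_image hinj]
    have h4 : Bm.image (idxB T v) ⊆ Finset.Icc m t := by
      intro a ha
      obtain ⟨w, hw, rfl⟩ := Finset.mem_image.mp ha
      have hw' := Finset.mem_filter.mp hw
      exact Finset.mem_Icc.mpr ⟨hw'.2.2, idxB_le_t hcard hw'.2.1⟩
    have h5 : ∑ a ∈ Bm.image (idxB T v), (r + (t + 1 - a)).choose (t + 1 - a) ≤
        ∑ a ∈ Finset.Icc m t, (r + (t + 1 - a)).choose (t + 1 - a) :=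
      Finset.sum_le_sum_of_subset h4
    have h6 : ∑ a ∈ Finset.Icc m t, (r + (t + 1 - a)).choose (t + 1 - a) =
        ∑ c ∈ Finset.Icc 1 (t + 1 - m), (r + c).choose c := by
      refine Finset.sum_nbij' (fun a => t + 1 - a) (fun c => t + 1 - c) ?_ ?_ ?_ ?_ ?_
      · intro a ha; simp only [Finset.mem_Icc] at *; omega
      · intro c hc; simp only [Finset.mem_Icc] at *; omega
      · intro a ha; simp only [Finset.mem_Icc] at ha; omega
      · intro c hc; simp only [Finset.mem_Icc] at hc; omega
      · intro a _; simp only []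
    calc (Finset.univ.filter (fun x => gR T (r+1) m v x)).card
        ≤ 1 + ∑ w ∈ Bm, (Finset.univ.filter (fun x => gR T r (idxB T v w) w x)).card := h1
      _ ≤ 1 + ∑ c ∈ Finset.Icc 1 (t + 1 - m), (r + c).choose c := by
          refine Nat.add_le_add_left ?_ 1
          rw [← h6]; exact le_trans h2 (le_of_eq h3 |>.trans h5)
      _ = (r + 1 + (t + 1 - m)).choose (t + 1 - m) := sum_choose_Icc r (t + 1 - m)

lemma card_decReach_le {t : ℕ} (hT : ∀ x y : V, T x y → x < y)
    (hTri : ∀ x y z : V, T x z → T y z → x < y → T x y)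
    (hcard : ∀ v : V, (Finset.univ.filter (fun z => T z v)).card ≤ t) (r : ℕ) (v : V) :
    (Finset.univ.filter (fun x => decReach T r v x)).card ≤ (r + t).choose t := by
  have hsub : (Finset.univ.filter (fun x => decReach T r v x)) ⊆
      (Finset.univ.filter (fun x => gR T r 1 v x)) := by
    intro x hx
    simp only [Finset.mem_filter, Finset.mem_univ, true_and] at hx ⊢
    exact decReach_to_gR hT hTri r v x hx
  have := le_trans (Finset.card_le_card hsub) (card_gR_le hT hTri hcard r 1 v le_rfl)
  simpa using this

end Abstract

section Lists

variable {V : Type*} [Fintype V] [LinearOrder V] {T : V → V → Prop}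

lemma decChain_to_decReach :
    ∀ (l : List V) (a x : V), List.Chain' (fun p q : V => T q p) l →
      l.head? = some a → l.getLast? = some x → decReach T (l.length - 1) a x := by
  intro l
  induction l with
  | nil => intro a x _ h; simp at h
  | cons b l ih =>
    intro a x hch hh hl
    have hab : b = a := by simpa using hh
    subst hab
    cases l with
    | nil =>
      have : b = x := by simpa using hl
      subst this
      exact decReach_self _ _
    | cons c l2 =>
      have hch' := (List.isChain_cons_cons.mp hch)
      have hrec := ih c x hch'.2 rfl (by simpa using hl)
      have : decReach T (l2.length + 1) b x := Or.inr ⟨c, hch'.1, hrec⟩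
      simpa using this

lemma findPeak (hT : ∀ x y : V, T x y → x < y)
    (hTri : ∀ x y z : V, T x z → T y z → x < y → T x y) (x : V) :
    ∀ l : List V, List.Chain' (fun a b => T a b ∨ T b a) l → (∀ z ∈ l, x ≤ z) →
      l.getLast? = some x →
      List.Chain' (fun p q : V => T q p) l ∨
      ∃ l' : List V, l'.length < l.length ∧ List.Chain' (fun a b => T a b ∨ T b a) l' ∧
        (∀ z ∈ l', x ≤ z) ∧ l'.getLast? = some x ∧ l'.head? = l.head? := by
  intro l
  induction l with
  | nil => intro _ _ _; exact Or.inl List.isChain_nil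
  | cons a l ih =>
    intro hch hmin hlast
    cases l with
    | nil => exact Or.inl (List.isChain_singleton a)
    | cons b l2 =>
      have hch1 := List.isChain_cons_cons.mp hch
      rcases hch1.1 with hab | hba
      · -- ascent : T a b, so a < b
        have haltb : a < b := hT a b hab
        cases l2 with
        | nil =>
          exfalso
          have hbx : b = x := by simpa using hlast
          have hax : x ≤ a := hmin a (by simp)
          rw [hbx] at haltb; exact absurd (lt_of_le_of_lt hax haltb) (lt_irrefl x)
        | cons c l3 =>
          have hch2 := List.isChain_cons_cons.mp hch1.2
          rcases hch2.1 with hbc | hcb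
          · -- double ascent: recurse on tail
            rcases ih hch1.2 (fun z hz => hmin z (List.mem_cons_of_mem a hz))
                (by simpa using hlast) with hdec | ⟨l', h1, h2, h3, h4, h5⟩
            · exfalso
              have : T c b := (List.isChain_cons_cons.mp hdec).1
              exact absurd (hT b c hbc) (not_lt.mpr (le_of_lt (hT c b this)))
            · cases l' with
              | nil => simp at h5
              | cons b' l'' =>
                have hb' : b' = b := by simpa using h5
                subst hb'
                refine Or.inr ⟨a :: b' :: l'', by simpa using h1, ?_, ?_, ?_, rfl⟩
                · exact List.isChain_cons_cons.mpr ⟨Or.inl hab, h2⟩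
                · intro z hz
                  rcases List.mem_cons.mp hz with rfl | hz
                  · exact hmin z (by simp)
                  · exact h3 z hz
                · simpa using h4
          · -- peak at b : T a b, T c b
            by_cases hac : a = c
            · refine Or.inr ⟨c :: l3, by simp, hch1.2.tail, ?_, ?_, by simp [hac]⟩
              · intro z hz; exact hmin z (by simp [List.mem_cons.mp hz])
              · simpa using hlast
            · have hAac : T a c ∨ T c a := by
                rcases lt_or_gt_of_ne hac with h | h
                · exact Or.inl (hTri a c b hab hcb h)
                · exact Or.inr (hTri c a b hcb hab h)
              refine Or.inr ⟨a :: c :: l3, by simp, ?_, ?_, ?_, rfl⟩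
              · exact List.isChain_cons_cons.mpr ⟨hAac, hch1.2.tail⟩
              · intro z hz
                rcases List.mem_cons.mp hz with rfl | hz
                · exact hmin z (by simp)
                · exact hmin z (by simp [List.mem_cons.mp hz])
              · simpa using hlast
      · -- descent : T b a
        rcases ih hch1.2 (fun z hz => hmin z (List.mem_cons_of_mem a hz))
            (by simpa using hlast) with hdec | ⟨l', h1, h2, h3, h4, h5⟩
        · exact Or.inl (List.isChain_cons_cons.mpr ⟨hba, hdec⟩)
        · cases l' with
          | nil => simp at h5
          | cons b' l'' =>
            have hb' : b' = b := by simpa using h5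
            subst hb'
            refine Or.inr ⟨a :: b' :: l'', by simpa using h1, ?_, ?_, ?_, rfl⟩
            · exact List.isChain_cons_cons.mpr ⟨Or.inr hba, h2⟩
            · intro z hz
              rcases List.mem_cons.mp hz with rfl | hz
              · exact hmin z (by simp)
              · exact h3 z hz
            · simpa using h4

lemma chain_to_decReach (hT : ∀ x y : V, T x y → x < y)
    (hTri : ∀ x y z : V, T x z → T y z → x < y → T x y) (x : V) :
    ∀ (n : ℕ) (l : List V) (a : V), l.length ≤ n →
      List.Chain' (fun a b => T a b ∨ T b a) l → (∀ z ∈ l, x ≤ z) →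
      l.getLast? = some x → l.head? = some a → decReach T (l.length - 1) a x := by
  intro n
  induction n with
  | zero =>
    intro l a hlen _ _ _ hh
    interval_cases hl : l.length
    · rw [List.length_eq_zero_iff] at hl; subst hl; simp at hh
  | succ n IH =>
    intro l a hlen hch hmin hlast hhead
    rcases findPeak hT hTri x l hch hmin hlast with hdec | ⟨l', h1, h2, h3, h4, h5⟩
    · exact decChain_to_decReach l a x hdec hhead hlast
    · have := IH l' a (by omega) h2 h3 h4 (by rw [h5, hhead])
      exact decReach_mono_r (by omega) this

end Lists

section Graphs

open SimpleGraph

variable {V : Type*} [Fintype V] [LO : LinearOrder V] {G : SimpleGraph V}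

lemma getVert_inj {a b : V} {w : G.Walk a b} (hw : w.IsPath) :
    ∀ i i', i ≤ w.length → i' ≤ w.length → w.getVert i = w.getVert i' → i = i' := by
  induction w with
  | nil => intro i i' hi hi' _; simp at hi hi'; omega
  | @cons u v c hadj p IH =>
    rw [SimpleGraph.Walk.cons_isPath_iff] at hw
    intro i i' hi hi' heq
    match i, i' with
    | 0, 0 => rfl
    | 0, (i'+1) =>
      exfalso
      rw [SimpleGraph.Walk.getVert_zero, SimpleGraph.Walk.getVert_cons_succ] at heq
      exact hw.2 (SimpleGraph.Walk.mem_support_iff_exists_getVert.mpr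
        ⟨i', heq.symm, by simpa using hi'⟩)
    | (i+1), 0 =>
      exfalso
      rw [SimpleGraph.Walk.getVert_zero, SimpleGraph.Walk.getVert_cons_succ] at heq
      exact hw.2 (SimpleGraph.Walk.mem_support_iff_exists_getVert.mpr
        ⟨i, heq, by simpa using hi⟩)
    | (i+1), (i'+1) =>
      rw [SimpleGraph.Walk.getVert_cons_succ, SimpleGraph.Walk.getVert_cons_succ] at heq
      have := IH hw.1 i i' (by simpa using hi) (by simpa using hi') heq
      omega

lemma accInf_lt (x y : V) (h : AccessibleInf G LO x y) : x < y := h.1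

lemma accInf_tri (x y z : V) (h1 : AccessibleInf G LO x z) (h2 : AccessibleInf G LO y z)
    (hxy : x < y) : AccessibleInf G LO x y := by
  classical
  obtain ⟨hxz, p, hp, hpsup⟩ := h1
  obtain ⟨hyz, q, hq, hqsup⟩ := h2
  refine ⟨hxy, (p.append q.reverse).bypass, SimpleGraph.Walk.bypass_isPath _, ?_⟩
  intro z' hz' hzx hzy
  have hz'' := SimpleGraph.Walk.support_bypass_subset _ hz'
  rw [SimpleGraph.Walk.support_append] at hz''
  rcases List.mem_append.mp hz'' with h | h
  · by_cases hzz : z' = z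
    · exact hzz ▸ hyz
    · exact lt_trans hyz (hpsup z' h hzx hzz)
  · have h' : z' ∈ q.support := by
      have := List.mem_of_mem_tail h
      rw [SimpleGraph.Walk.support_reverse] at this
      exact List.mem_reverse.mp this
    by_cases hzz : z' = z
    · exact hzz ▸ hyz
    · exact lt_trans hyz (hqsup z' h' hzy hzz)

lemma accInf_of_adj {x y : V} (hadj : G.Adj x y) (hxy : x < y) : AccessibleInf G LO x y := by
  refine ⟨hxy, SimpleGraph.Walk.cons hadj SimpleGraph.Walk.nil, by simp [hadj.ne], ?_⟩
  intro z hz hzx hzy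
  have : z = x ∨ z = y := by simpa using hz
  rcases this with h | h
  · exact absurd h hzx
  · exact absurd h hzy

lemma dacc_decomp {k : ℕ} {x y : V} (h : DAccessible G LO k x y) :
    ∃ u, AccessibleInf G LO u y ∧
      decReach (fun a b => AccessibleInf G LO a b) (k / 2) u x := by
  classical
  obtain ⟨hxy, w, hw, hlen, hmin, hsuf⟩ := h
  have hxley : x < y := lt_of_le_of_ne (hmin y w.end_mem_support) hxy
  set jset := (Finset.range (w.length + 1)).filter (fun i => w.getVert i < y) with hjset
  have h0 : (0 : ℕ) ∈ jset := by
    simp [hjset, SimpleGraph.Walk.getVert_zero, hxley]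
  have hjne : jset.Nonempty := ⟨0, h0⟩
  obtain ⟨j, hjmem, hjmax'⟩ : ∃ j ∈ jset, ∀ i ∈ jset, i ≤ j :=
    ⟨jset.max' hjne, jset.max'_mem hjne, fun i hi => jset.le_max' i hi⟩
  rw [hjset, Finset.mem_filter, Finset.mem_range] at hjmem
  have hj1 : j ≤ w.length := by omega
  have hj2 : w.getVert j < y := hjmem.2
  have hjmax : ∀ i, i ≤ w.length → w.getVert i < y → i ≤ j := by
    intro i hi hiy
    exact hjmax' i (by simp [hjset, Nat.lt_succ_of_le hi, hiy])
  have hjlt : j < w.length := by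
    rcases lt_or_eq_of_le hj1 with h | h
    · exact h
    · exfalso; rw [h, SimpleGraph.Walk.getVert_length] at hj2; exact lt_irrefl _ hj2
  have hjr : j ≤ k / 2 := by
    by_contra hcon
    exact absurd (hsuf j (by omega) hj1) (not_le.mpr hj2)
  set u := w.getVert j with hu
  have humem : u ∈ w.support :=
    SimpleGraph.Walk.mem_support_iff_exists_getVert.mpr ⟨j, rfl, hj1⟩
  set tw := w.takeUntil u humem with htw
  set dw := w.dropUntil u humem with hdw
  have hspec : tw.append dw = w := w.take_spec humem
  have hlensum : tw.length + dw.length = w.length := by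
    rw [← hspec, SimpleGraph.Walk.length_append]
  have htwu : w.getVert tw.length = u := by
    conv_lhs => rw [← hspec]
    rw [SimpleGraph.Walk.getVert_append]
    simp
  have htlj : tw.length = j :=
    getVert_inj hw tw.length j (w.length_takeUntil_le humem) hj1 (htwu.trans rfl)
  have hdrop_getVert : ∀ i', dw.getVert i' = w.getVert (j + i') := by
    intro i'
    conv_rhs => rw [← hspec]
    rw [SimpleGraph.Walk.getVert_append]
    rw [htlj]
    simp
  refine ⟨u, ⟨hj2, dw, hw.dropUntil humem, ?_⟩, ?_⟩
  · -- suffix gives AccessibleInf u y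
    intro z hz hzu hzy
    obtain ⟨i', hi'eq, hi'le⟩ := SimpleGraph.Walk.mem_support_iff_exists_getVert.mp hz
    have hi'pos : 1 ≤ i' := by
      rcases Nat.eq_zero_or_pos i' with rfl | h
      · exfalso; rw [SimpleGraph.Walk.getVert_zero] at hi'eq; exact hzu hi'eq.symm
      · exact h
    have hzw : w.getVert (j + i') = z := by rw [← hdrop_getVert]; exact hi'eq
    have hylez : ¬ (z < y) := by
      intro hzy'
      have := hjmax (j + i') (by omega) (hzw ▸ hzy')
      omega
    rcases lt_trichotomy y z with h | h | h
    · exact h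
    · exact absurd h.symm hzy
    · exact absurd h hylez
  · -- prefix gives decReach
    set l := tw.reverse.support with hl
    have hchain : List.Chain' G.Adj l := SimpleGraph.Walk.isChain_adj_support _
    have hchainA : List.Chain' (fun a b => AccessibleInf G LO a b ∨ AccessibleInf G LO b a) l := by
      refine hchain.imp ?_
      intro a b hadj
      rcases lt_trichotomy a b with h | h | h
      · exact Or.inl (accInf_of_adj hadj h)
      · exact absurd h hadj.ne
      · exact Or.inr (accInf_of_adj hadj.symm h)
    have hminl : ∀ z ∈ l, x ≤ z := by
      intro z hz
      rw [hl, SimpleGraph.Walk.support_reverse, List.mem_reverse] at hz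
      exact hmin z (w.support_takeUntil_subset humem hz)
    have hheadl : l.head? = some u := by
      rw [hl, SimpleGraph.Walk.support_eq_cons]; rfl
    have hlastl : l.getLast? = some x := by
      rw [hl, SimpleGraph.Walk.support_reverse, List.getLast?_reverse]
      rw [SimpleGraph.Walk.support_eq_cons]; rfl
    have hlenl : l.length = j + 1 := by
      rw [hl, SimpleGraph.Walk.length_support]
      simp [htlj]
    have := chain_to_decReach accInf_lt accInf_tri x l.length l u le_rfl hchainA hminl hlastl hheadl
    rw [hlenl] at this
    exact decReach_mono_r (by omega) this

end Graphs

/-- Theorem 9: if `G` admits a linear ordering `L` with `|R_{L,∞}(y)| ≤ t` for every vertex `y`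
(e.g. any graph of tree-width at most `t`), then `dcol_k(G) ≤ t·C(⌊k/2⌋+t, t) + 1`. -/
theorem dcol_le_of_accessibleInf_le
    [Fintype V] (G : SimpleGraph V) (k t : ℕ) (hk : 0 < k) (ht : 0 < t)
    (hG : ∃ L : LinearOrder V, ∀ y : V, {x : V | AccessibleInf G L x y}.ncard ≤ t) :
    dcol G k ≤ t * Nat.choose (k / 2 + t) t + 1 := by
  classical
  obtain ⟨L, hL⟩ := hG
  letI := L
  have hT : ∀ a b : V, AccessibleInf G L a b → a < b := fun a b h => h.1
  have hTri : ∀ a b c : V, AccessibleInf G L a c → AccessibleInf G L b c → a < b →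
      AccessibleInf G L a b := accInf_tri
  have hcard : ∀ v : V, (Finset.univ.filter (fun z => AccessibleInf G L z v)).card ≤ t := by
    intro v
    have h1 := hL v
    have h2 : {x | AccessibleInf G L x v} =
        ↑(Finset.univ.filter (fun z => AccessibleInf G L z v)) := by
      ext z; simp
    rw [h2, Set.ncard_coe_finset] at h1
    exact h1
  have key : ∀ y : V, {x : V | DAccessible G L k x y}.ncard ≤ t * Nat.choose (k / 2 + t) t := by
    intro y
    have h2 : {x | DAccessible G L k x y} =
        ↑(Finset.univ.filter (fun x => DAccessible G L k x y)) := by ext z; simp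
    rw [h2, Set.ncard_coe_finset]
    have hsub : Finset.univ.filter (fun x => DAccessible G L k x y) ⊆
        (Finset.univ.filter (fun z => AccessibleInf G L z y)).biUnion
          (fun u => Finset.univ.filter
            (fun x => decReach (fun a b => AccessibleInf G L a b) (k/2) u x)) := by
      intro x hx
      obtain ⟨u, hu1, hu2⟩ := dacc_decomp (Finset.mem_filter.mp hx).2
      exact Finset.mem_biUnion.mpr ⟨u, by simp [hu1], by simp [hu2]⟩
    calc (Finset.univ.filter (fun x => DAccessible G L k x y)).card
        ≤ _ := Finset.card_le_card hsub
      _ ≤ ∑ u ∈ Finset.univ.filter (fun z => AccessibleInf G L z y),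
            (Finset.univ.filter
              (fun x => decReach (fun a b => AccessibleInf G L a b) (k/2) u x)).card :=
          Finset.card_biUnion_le
      _ ≤ ∑ u ∈ Finset.univ.filter (fun z => AccessibleInf G L z y),
            Nat.choose (k/2 + t) t :=
          Finset.sum_le_sum (fun u _ => card_decReach_le hT hTri hcard (k/2) u)
      _ = (Finset.univ.filter (fun z => AccessibleInf G L z y)).card *
            Nat.choose (k/2 + t) t := by rw [Finset.sum_const, smul_eq_mul]
      _ ≤ t * Nat.choose (k/2 + t) t :=
          Nat.mul_le_mul_right _ (hcard y)
  have hmem : t * Nat.choose (k/2 + t) t ∈ { m : ℕ | ∃ L : LinearOrder V, ∀ y : V,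
      {x : V | DAccessible G L k x y}.ncard ≤ m } := ⟨L, key⟩
  have hinf := Nat.sInf_le hmem
  calc dcol G k = 1 + sInf { m : ℕ | ∃ L : LinearOrder V, ∀ y : V,
        {x : V | DAccessible G L k x y}.ncard ≤ m } := rfl
    _ ≤ 1 + t * Nat.choose (k/2 + t) t := Nat.add_le_add_left hinf 1
    _ = t * Nat.choose (k/2 + t) t + 1 := Nat.add_comm _ _
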